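/- Let m ∈ ℕ, w ∈ 𝕋, and f ∈ D_w^m, i.e., f = p + (z−w)^m g with deg p < m and g ∈ H². Then for each 0 ≤ j ≤ m−1, the j-th derivative f^{(j)}(z) converges to p^{(j)}(w) as z → w nontangentially (within any region Γ_α(w) = {z ∈ 𝔻 : |z−w| < α(1−|z|)}). -/

import Mathlib

open Filter Finset

set_option maxHeartbeats 800000

lemma my_tsum_cs (x y : ℕ → ℝ) (hx : ∀ n, 0 ≤ x n) (hy : ∀ n, 0 ≤ y n)
    (hx2 : Summable (fun n => x n ^ 2)) (hy2 : Summable (fun n => y n ^ 2)) :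
    ∑' n, x n * y n ≤ Real.sqrt (∑' n, x n ^ 2) * Real.sqrt (∑' n, y n ^ 2) := by
  have hs : Summable (fun n => x n * y n) := by
    apply Summable.of_nonneg_of_le (fun n => mul_nonneg (hx n) (hy n))
      (fun n => ?_) ((hx2.add hy2).div_const 2)
    nlinarith [sq_nonneg (x n - y n)]
  refine Summable.tsum_le_of_sum_le hs fun s => ?_
  have h1 : (∑ i ∈ s, x i * y i) ^ 2 ≤ (∑ i ∈ s, x i ^ 2) * ∑ i ∈ s, y i ^ 2 :=
    sum_mul_sq_le_sq_mul_sq s x y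
  have h2 : ∑ i ∈ s, x i ^ 2 ≤ ∑' n, x n ^ 2 := Summable.sum_le_tsum s (fun i _ => sq_nonneg _) hx2
  have h3 : ∑ i ∈ s, y i ^ 2 ≤ ∑' n, y n ^ 2 := Summable.sum_le_tsum s (fun i _ => sq_nonneg _) hy2
  have h4 : (0:ℝ) ≤ ∑ i ∈ s, x i * y i := sum_nonneg fun i _ => mul_nonneg (hx i) (hy i)
  have h5 : (∑ i ∈ s, x i * y i) ^ 2 ≤ (∑' n, x n ^ 2) * ∑' n, y n ^ 2 := by
    refine h1.trans (mul_le_mul h2 h3 (sum_nonneg fun i _ => sq_nonneg _) ?_)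
    exact le_trans (sum_nonneg fun i _ => sq_nonneg _) h2
  calc ∑ i ∈ s, x i * y i = Real.sqrt ((∑ i ∈ s, x i * y i) ^ 2) := by
        rw [Real.sqrt_sq h4]
    _ ≤ Real.sqrt ((∑' n, x n ^ 2) * ∑' n, y n ^ 2) := Real.sqrt_le_sqrt h5
    _ = _ := Real.sqrt_mul (le_trans (sum_nonneg (s:=s) fun i _ => sq_nonneg (x i)) h2) _


lemma my_deriv_step (c : ℕ → ℂ) (F : ℂ → ℂ) (C : ℝ) (k : ℕ)
    (hc : ∀ n, ‖c n‖ ≤ C * ((n + 1 : ℕ) : ℝ) ^ k)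
    (hF : ∀ y : ℂ, ‖y‖ < 1 → HasSum (fun n => c n * y ^ n) (F y))
    (z : ℂ) (hz : ‖z‖ < 1) :
    HasDerivAt F (∑' n, c n * ((n : ℂ) * z ^ (n - 1))) z ∧
      HasSum (fun n => (((n + 1 : ℕ)) : ℂ) * c (n + 1) * z ^ n) (deriv F z) := by
  have hC : 0 ≤ C := le_trans (norm_nonneg (c 0)) ((hc 0).trans (le_of_eq (by norm_num)))
  set r : ℝ := (1 + ‖z‖) / 2 with hr_def
  have hn0 : 0 ≤ ‖z‖ := norm_nonneg z
  have hr0 : 0 < r := by positivity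
  have hr1 : r < 1 := by simp only [hr_def]; linarith
  have hzr : ‖z‖ < r := by simp only [hr_def]; linarith
  have S0 : Summable (fun n : ℕ => (n : ℝ) ^ (k + 1) * r ^ n) :=
    summable_pow_mul_geometric_of_norm_lt_one (k + 1) (by rwa [Real.norm_eq_abs, abs_of_pos hr0])
  have S1 : Summable (fun n : ℕ => ((n + 1 : ℕ) : ℝ) ^ (k + 1) * r ^ (n + 1)) :=
    (summable_nat_add_iff 1).2 S0
  have S2 : Summable (fun n : ℕ => ((n + 1 : ℕ) : ℝ) ^ (k + 1) * r ^ n) := by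
    refine (S1.mul_right r⁻¹).congr fun n => ?_
    rw [pow_succ]
    field_simp
    ring
  set u : ℕ → ℝ := fun n => (C / r) * (((n + 1 : ℕ) : ℝ) ^ (k + 1) * r ^ n) with hu_def
  have hu : Summable u := S2.mul_left _
  have hbound : ∀ (n : ℕ) (y : ℂ), ‖y‖ ≤ r →
      ‖c n * ((n : ℂ) * y ^ (n - 1))‖ ≤ u n := by
    intro n y hyr
    have h1 : ‖c n * ((n : ℂ) * y ^ (n - 1))‖ = ‖c n‖ * ((n : ℝ) * ‖y‖ ^ (n - 1)) := by
      simp [norm_mul, norm_pow]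
    rw [h1]
    have hA : (n : ℝ) * ‖y‖ ^ (n - 1) ≤ ((n + 1 : ℕ) : ℝ) * (r ^ n / r) := by
      rcases Nat.eq_zero_or_pos n with h | h
      · subst h; simp; positivity
      · have he : r ^ (n - 1) = r ^ n / r := by
          rw [eq_div_iff hr0.ne', ← pow_succ, Nat.sub_add_cancel h]
        have : ‖y‖ ^ (n - 1) ≤ r ^ (n - 1) := pow_le_pow_left₀ (norm_nonneg _) hyr _
        calc (n : ℝ) * ‖y‖ ^ (n - 1) ≤ (n : ℝ) * r ^ (n - 1) := by
              apply mul_le_mul_of_nonneg_left this (Nat.cast_nonneg n)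
          _ ≤ ((n + 1 : ℕ) : ℝ) * (r ^ n / r) := by
              rw [he]
              apply mul_le_mul_of_nonneg_right (by push_cast; linarith) (by positivity)
    calc ‖c n‖ * ((n : ℝ) * ‖y‖ ^ (n - 1))
        ≤ (C * ((n + 1 : ℕ) : ℝ) ^ k) * (((n + 1 : ℕ) : ℝ) * (r ^ n / r)) := by
          apply mul_le_mul (hc n) hA ?_ (by positivity)
          · apply mul_nonneg (Nat.cast_nonneg n) (pow_nonneg (norm_nonneg _) _)
      _ = u n := by
          simp only [hu_def]
          field_simp
          ring
  -- each term has a derivative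
  have hder : ∀ (n : ℕ) (y : ℂ), HasDerivAt (fun x => c n * x ^ n) (c n * ((n : ℂ) * y ^ (n - 1))) y :=
    fun n y => (hasDerivAt_pow n y).const_mul (c n)
  have hg0 : Summable (fun n => c n * (0 : ℂ) ^ n) := by
    apply summable_of_ne_finset_zero (s := {0})
    intro n hn
    simp only [Finset.mem_singleton] at hn
    rw [zero_pow hn, mul_zero]
  have hball : (0 : ℂ) ∈ Metric.ball (0 : ℂ) r := by simp [hr0]
  have hzball : z ∈ Metric.ball (0 : ℂ) r := by rw [Metric.mem_ball, dist_zero_right]; exact hzr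
  have HD : HasDerivAt (fun y => ∑' n, c n * y ^ n) (∑' n, c n * ((n : ℂ) * z ^ (n - 1))) z := by
    apply hasDerivAt_tsum_of_isPreconnected hu Metric.isOpen_ball
      (convex_ball _ _).isPreconnected (fun n y _ => hder n y)
      (fun n y hy => hbound n y (le_of_lt (by rwa [Metric.mem_ball, dist_zero_right] at hy)))
      hball hg0 hzball
  have hEq : F =ᶠ[nhds z] (fun y => ∑' n, c n * y ^ n) := by
    filter_upwards [Metric.isOpen_ball.mem_nhds (by simpa [Metric.mem_ball, dist_zero_right] using hz : z ∈ Metric.ball (0:ℂ) 1)] with y hy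
    rw [Metric.mem_ball, dist_zero_right] at hy
    exact ((hF y hy).tsum_eq).symm
  have HDF : HasDerivAt F (∑' n, c n * ((n : ℂ) * z ^ (n - 1))) z := by
    exact HasDerivAt.congr_of_eventuallyEq HD hEq
  refine ⟨HDF, ?_⟩
  -- now reindex
  have hsumf : Summable (fun n => c n * ((n : ℂ) * z ^ (n - 1))) := by
    apply Summable.of_norm_bounded hu (fun n => hbound n z hzr.le)
  have hf : HasSum (fun n => c n * ((n : ℂ) * z ^ (n - 1))) (deriv F z) := by
    rw [HDF.deriv]
    exact hsumf.hasSum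
  have := (hasSum_nat_add_iff' (f := fun n => c n * ((n : ℂ) * z ^ (n - 1))) 1).2 hf
  simp only [Finset.range_one, Finset.sum_singleton, Nat.cast_zero, zero_mul, mul_zero,
    sub_zero] at this
  refine this.congr_fun fun n => ?_
  simp only [Nat.add_sub_cancel]
  ring

lemma my_hasSum_iteratedDeriv (a : ℕ → ℂ) (g : ℂ → ℂ) (C : ℝ) (ha : ∀ n, ‖a n‖ ≤ C)
    (hg : ∀ z : ℂ, ‖z‖ < 1 → HasSum (fun n => a n * z ^ n) (g z)) :
    ∀ i, ∀ z : ℂ, ‖z‖ < 1 →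
      HasSum (fun n => (((n + i).descFactorial i : ℕ) : ℂ) * a (n + i) * z ^ n)
        (iteratedDeriv i g z) := by
  have hC : 0 ≤ C := le_trans (norm_nonneg _) (ha 0)
  intro i
  induction i with
  | zero => intro z hz; simpa using hg z hz
  | succ i ih =>
      intro z hz
      set c : ℕ → ℂ := fun n => (((n + i).descFactorial i : ℕ) : ℂ) * a (n + i) with hc_def
      have hcb : ∀ n, ‖c n‖ ≤ (C * ((i + 1 : ℕ) : ℝ) ^ i) * ((n + 1 : ℕ) : ℝ) ^ i := by
        intro n
        have h1 : ‖c n‖ ≤ (((n + i).descFactorial i : ℕ) : ℝ) * C := by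
          simp only [hc_def, norm_mul, Complex.norm_natCast]
          exact mul_le_mul_of_nonneg_left (ha _) (Nat.cast_nonneg _)
        refine h1.trans ?_
        have h2 : ((n + i).descFactorial i : ℕ) ≤ ((n + 1) * (i + 1)) ^ i := by
          calc (n + i).descFactorial i ≤ (n + i) ^ i := Nat.descFactorial_le_pow _ _
            _ ≤ ((n + 1) * (i + 1)) ^ i := Nat.pow_le_pow_left (by nlinarith) i
        calc (((n + i).descFactorial i : ℕ) : ℝ) * C
            ≤ (((n + 1) * (i + 1) : ℕ) ^ i : ℕ) * C := by
              apply mul_le_mul_of_nonneg_right (by exact_mod_cast Nat.cast_le.2 h2) hC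
          _ = (C * ((i + 1 : ℕ) : ℝ) ^ i) * ((n + 1 : ℕ) : ℝ) ^ i := by push_cast [mul_pow]; ring
      have step := (my_deriv_step c (iteratedDeriv i g) (C * ((i + 1 : ℕ) : ℝ) ^ i) i hcb
        (fun y hy => ih y hy) z hz).2
      rw [← iteratedDeriv_succ] at step
      refine step.congr_fun fun n => ?_
      simp only [hc_def]
      have hnat : (n + (i + 1)).descFactorial (i + 1) = (n + 1) * ((n + 1 + i).descFactorial i) := by
        rw [show n + (i + 1) = (n + 1 + i) by omega, Nat.descFactorial_succ]
        congr 1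
        omega
      rw [show n + 1 + i = n + (i + 1) by omega]
      rw [hnat]
      push_cast
      rw [show n + (i + 1) = n + 1 + i by omega]
      ring

lemma my_choose_sq_le (a k : ℕ) : (a.choose k) ^ 2 ≤ (a + a).choose (k + k) := by
  rw [Nat.add_choose_eq]
  have hmem : ((k, k) : ℕ × ℕ) ∈ Finset.HasAntidiagonal.antidiagonal (k + k) := by
    simp [Finset.HasAntidiagonal.mem_antidiagonal]
  calc (a.choose k) ^ 2 = a.choose k * a.choose k := sq (a.choose k) ▸ by ring
    _ ≤ _ := Finset.single_le_sum (f := fun ij : ℕ × ℕ => a.choose ij.1 * a.choose ij.2)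
        (fun _ _ => Nat.zero_le _) hmem

lemma my_iteratedDeriv_bound (a : ℕ → ℂ) (g : ℂ → ℂ) (ha2 : Summable fun n => ‖a n‖ ^ 2)
    (hg : ∀ z : ℂ, ‖z‖ < 1 → HasSum (fun n => a n * z ^ n) (g z)) (i : ℕ) (z : ℂ)
    (hz : ‖z‖ < 1) :
    ‖iteratedDeriv i g z‖ ≤ (i.factorial : ℝ) * Real.sqrt (∑' n, ‖a n‖ ^ 2) *
      Real.sqrt (1 / (1 - ‖z‖) ^ (2 * i + 1)) := by
  set CA : ℝ := Real.sqrt (∑' n, ‖a n‖ ^ 2) with hCA_def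
  have hCA0 : 0 ≤ CA := Real.sqrt_nonneg _
  have ha : ∀ n, ‖a n‖ ≤ CA := by
    intro n
    have h1 : ‖a n‖ ^ 2 ≤ ∑' m, ‖a m‖ ^ 2 := Summable.le_tsum ha2 n (fun m _ => sq_nonneg _)
    have := Real.sqrt_le_sqrt h1
    rwa [Real.sqrt_sq (norm_nonneg _)] at this
  have HS := my_hasSum_iteratedDeriv a g CA ha hg i z hz
  set r : ℝ := ‖z‖ with hr_def
  have hr0 : 0 ≤ r := norm_nonneg z
  have hr1 : r < 1 := hz
  set x : ℕ → ℝ := fun n => ‖a (n + i)‖ with hx_def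
  set y : ℕ → ℝ := fun n => (((n + i).descFactorial i : ℕ) : ℝ) * r ^ n with hy_def
  have hxnn : ∀ n, 0 ≤ x n := fun n => norm_nonneg _
  have hynn : ∀ n, 0 ≤ y n := fun n => mul_nonneg (Nat.cast_nonneg _) (pow_nonneg hr0 n)
  -- summability of x^2
  have hx2 : Summable (fun n => x n ^ 2) := (summable_nat_add_iff i).2 ha2
  -- summability of y^2
  have hy2 : Summable (fun n => y n ^ 2) := by
    have hb : ∀ n, y n ^ 2 ≤ ((i + 1 : ℕ) : ℝ) ^ (2 * i) * (((n + 1 : ℕ) : ℝ) ^ (2 * i) * (r ^ 2) ^ n) := by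
      intro n
      have h2 : ((n + i).descFactorial i : ℕ) ≤ ((n + 1) * (i + 1)) ^ i :=
        le_trans (Nat.descFactorial_le_pow _ _) (Nat.pow_le_pow_left (by nlinarith) i)
      have h3 : (((n + i).descFactorial i : ℕ) : ℝ) ^ 2 ≤ (((n + 1 : ℕ) : ℝ) * ((i + 1 : ℕ) : ℝ)) ^ (2 * i) := by
        have := pow_le_pow_left₀ (Nat.cast_nonneg _ : (0:ℝ) ≤ (((n + i).descFactorial i : ℕ) : ℝ))
          (show (((n + i).descFactorial i : ℕ) : ℝ) ≤ (((n + 1) * (i + 1) : ℕ) ^ i : ℕ) by exact_mod_cast h2) 2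
        refine this.trans (le_of_eq ?_)
        push_cast
        rw [← pow_mul, Nat.mul_comm i 2]
      calc y n ^ 2 = (((n + i).descFactorial i : ℕ) : ℝ) ^ 2 * (r ^ 2) ^ n := by
            simp only [hy_def]; rw [mul_pow, ← pow_mul, Nat.mul_comm n 2, pow_mul]
        _ ≤ (((n + 1 : ℕ) : ℝ) * ((i + 1 : ℕ) : ℝ)) ^ (2 * i) * (r ^ 2) ^ n := by
            apply mul_le_mul_of_nonneg_right h3 (by positivity)
        _ = ((i + 1 : ℕ) : ℝ) ^ (2 * i) * (((n + 1 : ℕ) : ℝ) ^ (2 * i) * (r ^ 2) ^ n) := by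
            rw [mul_pow]; ring
    have hr2 : ‖(r ^ 2 : ℝ)‖ < 1 := by
      rw [Real.norm_eq_abs, abs_of_nonneg (sq_nonneg r)]
      nlinarith
    have S0 : Summable (fun n : ℕ => (n : ℝ) ^ (2 * i) * (r ^ 2) ^ n) :=
      summable_pow_mul_geometric_of_norm_lt_one (2 * i) hr2
    have S1 : Summable (fun n : ℕ => ((n + 1 : ℕ) : ℝ) ^ (2 * i) * (r ^ 2) ^ (n + 1)) :=
      (summable_nat_add_iff 1).2 S0
    have S2 : Summable (fun n : ℕ => ((n + 1 : ℕ) : ℝ) ^ (2 * i) * (r ^ 2) ^ n) := by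
      rcases eq_or_lt_of_le (sq_nonneg r) with h | h
      · apply summable_of_ne_finset_zero (s := {0})
        intro n hn
        simp only [Finset.mem_singleton] at hn
        rw [← h, zero_pow hn, mul_zero]
      · refine ((S1.mul_right (r ^ 2)⁻¹).congr fun n => ?_)
        rw [pow_succ]
        field_simp
        ring_nf
        exact mul_inv_cancel₀ (by intro h0; rw [h0] at h; simp at h)
    exact Summable.of_nonneg_of_le (fun n => sq_nonneg _) hb (S2.mul_left _)
  -- norm of the sum ≤ tsum of x*y
  have hsum_xy : Summable (fun n => x n * y n) := by
    apply Summable.of_nonneg_of_le (fun n => mul_nonneg (hxnn n) (hynn n)) (fun n => ?_)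
      ((hx2.add hy2).div_const 2)
    nlinarith [sq_nonneg (x n - y n), hxnn n, hynn n]
  have hnorm : ‖iteratedDeriv i g z‖ ≤ ∑' n, x n * y n := by
    have heq : ∀ n, ‖(((n + i).descFactorial i : ℕ) : ℂ) * a (n + i) * z ^ n‖ = x n * y n := by
      intro n
      simp only [hx_def, hy_def, norm_mul, norm_pow, Complex.norm_natCast]
      ring
    have hsn : Summable (fun n => ‖(((n + i).descFactorial i : ℕ) : ℂ) * a (n + i) * z ^ n‖) := by
      exact hsum_xy.congr fun n => (heq n).symm
    calc ‖iteratedDeriv i g z‖ = ‖∑' n, (((n + i).descFactorial i : ℕ) : ℂ) * a (n + i) * z ^ n‖ := by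
          rw [HS.tsum_eq]
      _ ≤ ∑' n, ‖(((n + i).descFactorial i : ℕ) : ℂ) * a (n + i) * z ^ n‖ := norm_tsum_le_tsum_norm hsn
      _ = ∑' n, x n * y n := tsum_congr heq
  -- Cauchy-Schwarz
  have hCS := my_tsum_cs x y hxnn hynn hx2 hy2
  -- bound on tsum y^2
  have hy2sum : ∑' n, y n ^ 2 ≤ ((i.factorial : ℝ)) ^ 2 * (1 / (1 - r) ^ (2 * i + 1)) := by
    have hf : ∀ k : ℕ, (0:ℝ) ≤ (((k + 2 * i).choose (2 * i) : ℕ) : ℝ) * r ^ k := by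
      intro k; positivity
    have hfs : Summable (fun k : ℕ => (((k + 2 * i).choose (2 * i) : ℕ) : ℝ) * r ^ k) := by
      have := summable_choose_mul_geometric_of_norm_lt_one (2 * i)
        (r := r) (by rwa [Real.norm_eq_abs, abs_of_nonneg hr0])
      exact this
    have hterm : ∀ n, y n ^ 2 ≤ (i.factorial : ℝ) ^ 2 *
        ((((2 * n + 2 * i).choose (2 * i) : ℕ) : ℝ) * r ^ (2 * n)) := by
      intro n
      have hd : (n + i).descFactorial i = i.factorial * (n + i).choose i :=
        Nat.descFactorial_eq_factorial_mul_choose _ _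
      have hcs : ((n + i).choose i) ^ 2 ≤ (2 * n + 2 * i).choose (2 * i) := by
        have := my_choose_sq_le (n + i) i
        convert this using 2 <;> omega
      have : ((n + i).descFactorial i) ^ 2 ≤ i.factorial ^ 2 * ((2 * n + 2 * i).choose (2 * i)) := by
        rw [hd, mul_pow]
        exact Nat.mul_le_mul_left _ hcs
      calc y n ^ 2 = (((n + i).descFactorial i : ℕ) : ℝ) ^ 2 * r ^ (2 * n) := by
            simp only [hy_def]; rw [mul_pow, ← pow_mul, Nat.mul_comm n 2]
        _ ≤ ((i.factorial ^ 2 * ((2 * n + 2 * i).choose (2 * i)) : ℕ) : ℝ) * r ^ (2 * n) := by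
            apply mul_le_mul_of_nonneg_right ?_ (by positivity)
            calc (((n + i).descFactorial i : ℕ) : ℝ) ^ 2
                = (((n + i).descFactorial i ^ 2 : ℕ) : ℝ) := by push_cast; ring
              _ ≤ _ := by exact_mod_cast this
        _ = (i.factorial : ℝ) ^ 2 * ((((2 * n + 2 * i).choose (2 * i) : ℕ) : ℝ) * r ^ (2 * n)) := by
            push_cast; ring
    have hsub : Summable (fun n : ℕ => (((2 * n + 2 * i).choose (2 * i) : ℕ) : ℝ) * r ^ (2 * n)) := by
      have hinj : Function.Injective (fun n : ℕ => 2 * n) := fun a b h => by dsimp only at h; omega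
      have := hfs.comp_injective hinj
      exact this.congr fun n => by simp
    calc ∑' n, y n ^ 2 ≤ ∑' n, (i.factorial : ℝ) ^ 2 *
          ((((2 * n + 2 * i).choose (2 * i) : ℕ) : ℝ) * r ^ (2 * n)) :=
        Summable.tsum_le_tsum hterm hy2 (hsub.mul_left _)
      _ = (i.factorial : ℝ) ^ 2 * ∑' n, (((2 * n + 2 * i).choose (2 * i) : ℕ) : ℝ) * r ^ (2 * n) :=
        tsum_mul_left
      _ ≤ (i.factorial : ℝ) ^ 2 * ∑' k, (((k + 2 * i).choose (2 * i) : ℕ) : ℝ) * r ^ k := by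
        apply mul_le_mul_of_nonneg_left ?_ (by positivity)
        exact Summable.tsum_le_tsum_of_inj (fun n : ℕ => 2 * n) (fun a b h => by dsimp only at h; omega)
          (fun c _ => hf c) (fun n => le_refl _) hsub hfs
      _ = (i.factorial : ℝ) ^ 2 * (1 / (1 - r) ^ (2 * i + 1)) := by
        rw [tsum_choose_mul_geometric_of_norm_lt_one (2 * i)
          (by rwa [Real.norm_eq_abs, abs_of_nonneg hr0])]
  -- finish
  have hx2sum : ∑' n, x n ^ 2 ≤ ∑' n, ‖a n‖ ^ 2 := by
    exact Summable.tsum_le_tsum_of_inj (fun n : ℕ => n + i) (fun a b h => by dsimp only at h; omega)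
      (fun c _ => sq_nonneg _) (fun n => le_refl _) hx2 ha2
  calc ‖iteratedDeriv i g z‖ ≤ ∑' n, x n * y n := hnorm
    _ ≤ Real.sqrt (∑' n, x n ^ 2) * Real.sqrt (∑' n, y n ^ 2) := hCS
    _ ≤ Real.sqrt (∑' n, ‖a n‖ ^ 2) * Real.sqrt ((i.factorial : ℝ) ^ 2 * (1 / (1 - r) ^ (2 * i + 1))) := by
        apply mul_le_mul (Real.sqrt_le_sqrt hx2sum) (Real.sqrt_le_sqrt hy2sum)
          (Real.sqrt_nonneg _) (Real.sqrt_nonneg _)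
    _ = (i.factorial : ℝ) * Real.sqrt (∑' n, ‖a n‖ ^ 2) * Real.sqrt (1 / (1 - r) ^ (2 * i + 1)) := by
        rw [Real.sqrt_mul (sq_nonneg _), Real.sqrt_sq (Nat.cast_nonneg _)]
        ring

lemma my_coeff_bound (a : ℕ → ℂ) (C : ℝ) (hC : 0 ≤ C) (ha : ∀ n, ‖a n‖ ≤ C) (i : ℕ) :
    ∀ n, ‖(((n + i).descFactorial i : ℕ) : ℂ) * a (n + i)‖ ≤
      (C * ((i + 1 : ℕ) : ℝ) ^ i) * ((n + 1 : ℕ) : ℝ) ^ i := by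
  intro n
  have h1 : ‖(((n + i).descFactorial i : ℕ) : ℂ) * a (n + i)‖ ≤
      (((n + i).descFactorial i : ℕ) : ℝ) * C := by
    rw [norm_mul, Complex.norm_natCast]
    exact mul_le_mul_of_nonneg_left (ha _) (Nat.cast_nonneg _)
  refine h1.trans ?_
  have h2 : ((n + i).descFactorial i : ℕ) ≤ ((n + 1) * (i + 1)) ^ i :=
    le_trans (Nat.descFactorial_le_pow _ _) (Nat.pow_le_pow_left (by nlinarith) i)
  calc (((n + i).descFactorial i : ℕ) : ℝ) * C
      ≤ ((((n + 1) * (i + 1)) ^ i : ℕ) : ℝ) * C := by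
        apply mul_le_mul_of_nonneg_right (by exact_mod_cast h2) hC
    _ = (C * ((i + 1 : ℕ) : ℝ) ^ i) * ((n + 1 : ℕ) : ℝ) ^ i := by push_cast [mul_pow]; ring

lemma my_hasDerivAt_iteratedDeriv (a : ℕ → ℂ) (g : ℂ → ℂ) (C : ℝ) (ha : ∀ n, ‖a n‖ ≤ C)
    (hg : ∀ z : ℂ, ‖z‖ < 1 → HasSum (fun n => a n * z ^ n) (g z)) (i : ℕ) (z : ℂ)
    (hz : ‖z‖ < 1) : DifferentiableAt ℂ (iteratedDeriv i g) z := by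
  have hC : 0 ≤ C := le_trans (norm_nonneg _) (ha 0)
  exact (my_deriv_step _ (iteratedDeriv i g) (C * ((i + 1 : ℕ) : ℝ) ^ i) i
    (my_coeff_bound a C hC ha i)
    (fun y hy => my_hasSum_iteratedDeriv a g C ha hg i y hy) z hz).1.differentiableAt

lemma my_iteratedDeriv_poly (q : Polynomial ℂ) (k : ℕ) :
    iteratedDeriv k (fun x : ℂ => q.eval x) =
      fun x => ((Polynomial.derivative (R := ℂ))^[k] q).eval x := by
  induction k with
  | zero => simp
  | succ k ih =>
      rw [iteratedDeriv_succ, ih, Function.iterate_succ_apply']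
      funext x
      exact Polynomial.deriv (p := (Polynomial.derivative (R := ℂ))^[k] q)

lemma my_derivative_pow (w : ℂ) (m k : ℕ) (hk : k ≤ m) :
    (Polynomial.derivative (R := ℂ))^[k] ((Polynomial.X - Polynomial.C w) ^ m) =
      ((m.descFactorial k : ℕ) : ℂ) • (Polynomial.X - Polynomial.C w) ^ (m - k) := by
  induction k with
  | zero => simp
  | succ k ih =>
      have hk' : k ≤ m := Nat.le_of_succ_le hk
      rw [Function.iterate_succ_apply', ih hk', Polynomial.derivative_smul,
        Polynomial.derivative_pow, Polynomial.derivative_X_sub_C]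
      have h1 : m.descFactorial (k + 1) = (m - k) * m.descFactorial k :=
        Nat.descFactorial_succ m k
      have h2 : m - k - 1 = m - (k + 1) := by omega
      rw [h1, h2]
      push_cast
      rw [Polynomial.smul_eq_C_mul, Polynomial.smul_eq_C_mul]
      push_cast
      rw [mul_one, ← mul_assoc, ← Polynomial.C_mul]
      congr 2
      ring

lemma my_iteratedDeriv_add {F G : ℂ → ℂ} {s : Set ℂ} (hs : IsOpen s)
    (hF : ∀ k, Differentiable ℂ (iteratedDeriv k F))
    (hG : ∀ k, ∀ z ∈ s, DifferentiableAt ℂ (iteratedDeriv k G) z) (k : ℕ) :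
    Set.EqOn (iteratedDeriv k (fun y => F y + G y))
      (fun y => iteratedDeriv k F y + iteratedDeriv k G y) s := by
  induction k with
  | zero => intro z _; simp
  | succ k ih =>
      intro z hz
      have hev : iteratedDeriv k (fun y => F y + G y) =ᶠ[nhds z]
          (fun y => iteratedDeriv k F y + iteratedDeriv k G y) :=
        Filter.eventuallyEq_of_mem (hs.mem_nhds hz) ih
      rw [iteratedDeriv_succ, iteratedDeriv_succ, iteratedDeriv_succ, hev.deriv_eq]
      exact deriv_add ((hF k).differentiableAt) (hG k z hz)

/-- `f` is (the analytic extension of) a function in the Hardy space `H²` of the unit disc: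
its Taylor coefficients are square-summable. -/
def MemHardy2 (f : ℂ → ℂ) : Prop :=
  ∃ a : ℕ → ℂ, Summable (fun n => ‖a n‖ ^ 2) ∧
    ∀ z ∈ Metric.ball (0 : ℂ) 1, HasSum (fun n => a n * z ^ n) (f z)

theorem stmt15 (m : ℕ) (w : ℂ) (hw : ‖w‖ = 1)
    (p : Polynomial ℂ) (hp : p.degree < (m : WithBot ℕ))
    (g : ℂ → ℂ) (hg : MemHardy2 g) (j : ℕ) (hj : j < m) (α : ℝ) (hα : 0 < α) :
    Filter.Tendsto (iteratedDeriv j (fun z => p.eval z + (z - w) ^ m * g z))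
      (nhdsWithin w {z : ℂ | ‖z‖ < 1 ∧ ‖z - w‖ < α * (1 - ‖z‖)})
      (nhds (((Polynomial.derivative (R := ℂ))^[j] p).eval w)) := by
  classical
  obtain ⟨a, ha2, hgsum⟩ := hg
  have hgs : ∀ z : ℂ, ‖z‖ < 1 → HasSum (fun n => a n * z ^ n) (g z) := fun z hz =>
    hgsum z (mem_ball_zero_iff.2 hz)
  set CA : ℝ := Real.sqrt (∑' n, ‖a n‖ ^ 2) with hCA_def
  have hCA0 : 0 ≤ CA := Real.sqrt_nonneg _
  have ha : ∀ n, ‖a n‖ ≤ CA := by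
    intro n
    have h1 : ‖a n‖ ^ 2 ≤ ∑' k, ‖a k‖ ^ 2 := Summable.le_tsum ha2 n (fun k _ => sq_nonneg _)
    have := Real.sqrt_le_sqrt h1
    rwa [Real.sqrt_sq (norm_nonneg _)] at this
  set h : ℂ → ℂ := fun y => (y - w) ^ m * g y with hh_def
  set S : Set ℂ := {z : ℂ | ‖z‖ < 1 ∧ ‖z - w‖ < α * (1 - ‖z‖)} with hS_def
  set B : Set ℂ := Metric.ball (0 : ℂ) 1 with hB_def
  set q : Polynomial ℂ := (Polynomial.derivative (R := ℂ))^[j] p with hq_def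
  -- analyticity of h and its iterated derivatives on B
  have hgd : DifferentiableOn ℂ g B := by
    intro z hz
    have := my_hasDerivAt_iteratedDeriv a g CA ha hgs 0 z (mem_ball_zero_iff.1 hz)
    rw [iteratedDeriv_zero] at this
    exact this.differentiableWithinAt
  have hganal : AnalyticOnNhd ℂ g B := hgd.analyticOnNhd Metric.isOpen_ball
  have huanal : AnalyticOnNhd ℂ (fun y : ℂ => (y - w) ^ m) B :=
    ((analyticOnNhd_id).sub analyticOnNhd_const).pow m
  have hhanal : AnalyticOnNhd ℂ h B := huanal.mul hganal
  have hana : ∀ k, AnalyticOnNhd ℂ (iteratedDeriv k h) B := by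
    intro k
    induction k with
    | zero => simpa [iteratedDeriv_zero] using hhanal
    | succ k ih => rw [iteratedDeriv_succ]; exact ih.deriv
  have hFdiff : ∀ k, Differentiable ℂ (iteratedDeriv k (fun y : ℂ => p.eval y)) := by
    intro k
    rw [my_iteratedDeriv_poly]
    exact Polynomial.differentiable _
  have hGdiff : ∀ k, ∀ z ∈ B, DifferentiableAt ℂ (iteratedDeriv k h) z := fun k z hz =>
    (hana k z hz).differentiableAt
  -- eventual equality
  have hevent : (fun z => q.eval z + iteratedDeriv j h z) =ᶠ[nhdsWithin w S]
      iteratedDeriv j (fun z => p.eval z + (z - w) ^ m * g z) := by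
    filter_upwards [self_mem_nhdsWithin] with z hz
    have hzB : z ∈ B := mem_ball_zero_iff.2 hz.1
    have heq := my_iteratedDeriv_add Metric.isOpen_ball hFdiff hGdiff j hzB
    have hpe : iteratedDeriv j (fun y : ℂ => p.eval y) z = q.eval z := by
      rw [my_iteratedDeriv_poly]
    calc q.eval z + iteratedDeriv j h z
        = iteratedDeriv j (fun y : ℂ => p.eval y) z + iteratedDeriv j h z := by rw [hpe]
      _ = iteratedDeriv j (fun y => p.eval y + h y) z := (heq).symm
  -- polynomial part tendsto
  have hpt : Filter.Tendsto (fun z => q.eval z) (nhdsWithin w S) (nhds (q.eval w)) :=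
    (Polynomial.continuousAt (p := q)).tendsto.mono_left nhdsWithin_le_nhds
  -- constant
  set K : ℝ := ∑ i ∈ Finset.range (j + 1), (j.choose i : ℝ) * (m.descFactorial i : ℝ) *
    α ^ (m - i) * (((j - i).factorial : ℝ) * CA) with hK_def
  -- bound on the h part
  have hbound : ∀ z ∈ S, ‖iteratedDeriv j h z‖ ≤ K * Real.sqrt (1 - ‖z‖) := by
    intro z hz
    obtain ⟨hz1, hzw⟩ := hz
    have hzB : z ∈ B := mem_ball_zero_iff.2 hz1
    set t : ℝ := 1 - ‖z‖ with ht_def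
    have ht0 : 0 < t := by simp only [ht_def]; linarith
    have ht1 : t ≤ 1 := by simp only [ht_def]; linarith [norm_nonneg z]
    -- Leibniz bound
    have hucd : ContDiffOn ℂ (j : WithTop ℕ∞) (fun y : ℂ => (y - w) ^ m) B :=
      (((contDiff_id.sub contDiff_const).pow m)).contDiffOn
    have hgcd : ContDiffOn ℂ (j : WithTop ℕ∞) g B :=
      hganal.contDiffOn Metric.isOpen_ball.uniqueDiffOn
    have hleib := norm_iteratedFDerivWithin_mul_le (𝕜 := ℂ) hucd hgcd
      Metric.isOpen_ball.uniqueDiffOn hzB (le_refl (j : WithTop ℕ∞))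
    have hDh : ‖iteratedDeriv j h z‖ = ‖iteratedFDerivWithin ℂ j h B z‖ := by
      rw [iteratedFDerivWithin_of_isOpen j Metric.isOpen_ball hzB,
        norm_iteratedFDeriv_eq_norm_iteratedDeriv]
    rw [hDh]
    refine le_trans hleib ?_
    rw [hK_def, Finset.sum_mul]
    apply Finset.sum_le_sum
    intro i hi
    simp only [Finset.mem_range] at hi
    have him : i ≤ m := by omega
    -- u factor
    have huval : ‖iteratedFDerivWithin ℂ i (fun y : ℂ => (y - w) ^ m) B z‖ =
        (m.descFactorial i : ℝ) * ‖z - w‖ ^ (m - i) := by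
      rw [iteratedFDerivWithin_of_isOpen i Metric.isOpen_ball hzB,
        norm_iteratedFDeriv_eq_norm_iteratedDeriv]
      have hu_eq : (fun y : ℂ => (y - w) ^ m) =
          fun y => ((Polynomial.X - Polynomial.C w) ^ m).eval y := by
        funext y; simp
      rw [hu_eq, my_iteratedDeriv_poly, my_derivative_pow w m i him]
      simp [norm_smul, norm_pow]
    -- g factor
    have hgval : ‖iteratedFDerivWithin ℂ (j - i) g B z‖ ≤
        (((j - i).factorial : ℝ) * CA) * Real.sqrt (1 / t ^ (2 * (j - i) + 1)) := by
      rw [iteratedFDerivWithin_of_isOpen (j - i) Metric.isOpen_ball hzB,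
        norm_iteratedFDeriv_eq_norm_iteratedDeriv]
      have := my_iteratedDeriv_bound a g ha2 hgs (j - i) z hz1
      calc ‖iteratedDeriv (j - i) g z‖
          ≤ ((j - i).factorial : ℝ) * Real.sqrt (∑' n, ‖a n‖ ^ 2) *
            Real.sqrt (1 / (1 - ‖z‖) ^ (2 * (j - i) + 1)) := this
        _ = (((j - i).factorial : ℝ) * CA) * Real.sqrt (1 / t ^ (2 * (j - i) + 1)) := by
            rw [hCA_def, ht_def]
    set s : ℕ := j - i with hs_def
    set e : ℕ := m - i with he_def
    have hse : s + 1 ≤ e := by omega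
    -- key inequality
    have hsq : Real.sqrt (1 / t ^ (2 * s + 1)) = (1 / t ^ s) * Real.sqrt (1 / t) := by
      rw [show (1 : ℝ) / t ^ (2 * s + 1) = (1 / t ^ s) ^ 2 * (1 / t) by
        field_simp
        rw [two_mul, pow_add, pow_add, pow_one]
        ring]
      rw [Real.sqrt_mul (sq_nonneg _), Real.sqrt_sq (by positivity)]
    have h2 : t ^ e * Real.sqrt (1 / t ^ (2 * s + 1)) ≤ Real.sqrt t := by
      rw [hsq]
      have htp : t ^ e ≤ t ^ (s + 1) := pow_le_pow_of_le_one ht0.le ht1 hse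
      calc t ^ e * ((1 / t ^ s) * Real.sqrt (1 / t))
          ≤ t ^ (s + 1) * ((1 / t ^ s) * Real.sqrt (1 / t)) := by
            apply mul_le_mul_of_nonneg_right htp (by positivity)
        _ = t * Real.sqrt (1 / t) := by
            have hts : t ^ (s + 1) * (1 / t ^ s) = t := by
              rw [pow_succ]
              field_simp
            rw [← mul_assoc, hts]
        _ = Real.sqrt t := by
            rw [one_div, Real.sqrt_inv, ← div_eq_mul_inv, Real.div_sqrt]
    have hdnn : (0 : ℝ) ≤ (m.descFactorial i : ℝ) := Nat.cast_nonneg _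
    have hFnn : (0 : ℝ) ≤ ((j - i).factorial : ℝ) * CA :=
      mul_nonneg (Nat.cast_nonneg _) hCA0
    have key : ‖z - w‖ ^ (m - i) * ‖iteratedFDerivWithin ℂ (j - i) g B z‖ ≤
        α ^ (m - i) * ((((j - i).factorial : ℝ) * CA) * Real.sqrt t) := by
      calc ‖z - w‖ ^ (m - i) * ‖iteratedFDerivWithin ℂ (j - i) g B z‖
          ≤ (α * t) ^ (m - i) * ((((j - i).factorial : ℝ) * CA) *
              Real.sqrt (1 / t ^ (2 * (j - i) + 1))) := by
            apply mul_le_mul (pow_le_pow_left₀ (norm_nonneg _) hzw.le _) hgval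
              (norm_nonneg _) (by positivity)
        _ = α ^ (m - i) * ((((j - i).factorial : ℝ) * CA) *
              (t ^ e * Real.sqrt (1 / t ^ (2 * s + 1)))) := by
            rw [mul_pow, he_def, hs_def]
            ring
        _ ≤ α ^ (m - i) * ((((j - i).factorial : ℝ) * CA) * Real.sqrt t) := by
            apply mul_le_mul_of_nonneg_left ?_ (by positivity)
            exact mul_le_mul_of_nonneg_left h2 hFnn
    calc (j.choose i : ℝ) * ‖iteratedFDerivWithin ℂ i (fun y : ℂ => (y - w) ^ m) B z‖ *
          ‖iteratedFDerivWithin ℂ (j - i) g B z‖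
        = (j.choose i : ℝ) * (m.descFactorial i : ℝ) *
          (‖z - w‖ ^ (m - i) * ‖iteratedFDerivWithin ℂ (j - i) g B z‖) := by
          rw [huval]; ring
      _ ≤ (j.choose i : ℝ) * (m.descFactorial i : ℝ) *
          (α ^ (m - i) * ((((j - i).factorial : ℝ) * CA) * Real.sqrt t)) := by
          apply mul_le_mul_of_nonneg_left key (by positivity)
      _ = (j.choose i : ℝ) * (m.descFactorial i : ℝ) * α ^ (m - i) *
          ((((j - i).factorial : ℝ)) * CA) * Real.sqrt t := by ring
  -- the h part tends to 0
  have hKnn : 0 ≤ K := by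
    rw [hK_def]
    apply Finset.sum_nonneg
    intro i _
    have : (0:ℝ) ≤ α ^ (m - i) := by positivity
    apply mul_nonneg (mul_nonneg (mul_nonneg (Nat.cast_nonneg _) (Nat.cast_nonneg _)) this)
      (mul_nonneg (Nat.cast_nonneg _) hCA0)
  have hnormten : Filter.Tendsto (fun z : ℂ => ‖z‖) (nhdsWithin w S) (nhds 1) := by
    have := (continuous_norm.tendsto w).mono_left (nhdsWithin_le_nhds (s := S))
    rwa [hw] at this
  have htten : Filter.Tendsto (fun z : ℂ => K * Real.sqrt (1 - ‖z‖)) (nhdsWithin w S)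
      (nhds 0) := by
    have h1 : Filter.Tendsto (fun z : ℂ => 1 - ‖z‖) (nhdsWithin w S) (nhds 0) := by
      have := tendsto_const_nhds (x := (1 : ℝ)) (f := nhdsWithin w S) |>.sub hnormten
      simpa using this
    have h2 : Filter.Tendsto (fun z : ℂ => Real.sqrt (1 - ‖z‖)) (nhdsWithin w S) (nhds 0) := by
      have := (Real.continuous_sqrt.tendsto 0).comp h1
      simpa [Function.comp_def] using this
    have := h2.const_mul K
    simpa using this
  have hh0 : Filter.Tendsto (iteratedDeriv j h) (nhdsWithin w S) (nhds 0) := by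
    apply squeeze_zero_norm' ?_ htten
    filter_upwards [self_mem_nhdsWithin] with z hz using hbound z hz
  have hsum := hpt.add hh0
  rw [add_zero] at hsum
  exact hsum.congr' hevent
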